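/- Let X be an infinite-dimensional complex Banach space that finitely factors ℓ_q ↪ ℓ_∞ for some 2 ≤ q ≤ ∞, i.e., for each N there exist x₁,…,x_N ∈ X with (1/2)‖λ‖_∞ ≤ ‖∑_{k=1}^N λ_k x_k‖ ≤ ‖λ‖_q for all λ ∈ ℂ^N. Suppose z ∈ ℂ^ℕ is such that for some constant c(z) > 0, every bounded X-valued 1-homogeneous function f(u) = ∑_k y_k u_k on 𝕋^∞ satisfies ∑_k ‖y_k‖·|z_k| ≤ c(z)·sup_{u ∈ 𝕋^∞} ‖∑_k y_k u_k‖. Then z ∈ ℓ_{q'}, where 1/q + 1/q' = 1. -/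

import Mathlib

open MeasureTheory

/-- The point `e^{2πit}` on the unit circle `𝕋 ⊆ ℂ`. -/
noncomputable def torus (t : ℝ) : ℂ := Complex.exp (2 * Real.pi * Complex.I * t)

/-- The `ℓ_q` norm of a finite complex vector, `q ∈ [1,∞]` (via `PiLp`). -/
noncomputable def lqNorm (q : ENNReal) {N : ℕ} (lam : Fin N → ℂ) : ℝ :=
  ‖(WithLp.equiv q (Fin N → ℂ)).symm lam‖

lemma norm_torus (t : ℝ) : ‖torus t‖ = 1 := by
  have h : (2 * Real.pi * Complex.I * (t : ℂ)) = ((2 * Real.pi * t : ℝ) : ℂ) * Complex.I := by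
    push_cast; ring
  rw [torus, h, Complex.norm_exp_ofReal_mul_I]

lemma lqNorm_congr (q : ENNReal) (hq : q ≠ 0) {N : ℕ} (f g : Fin N → ℂ)
    (h : ∀ i, ‖f i‖ = ‖g i‖) : lqNorm q f = lqNorm q g := by
  unfold lqNorm
  rcases eq_or_ne q ⊤ with rfl | hqt
  · rw [PiLp.norm_eq_ciSup, PiLp.norm_eq_ciSup]
    simp only [WithLp.equiv_symm_apply, PiLp.toLp_apply, h]
  · have hp : 0 < q.toReal := ENNReal.toReal_pos hq hqt
    rw [PiLp.norm_eq_sum hp, PiLp.norm_eq_sum hp]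
    simp only [WithLp.equiv_symm_apply, PiLp.toLp_apply, h]

lemma lqNorm_nonneg (q : ENNReal) (hq : 1 ≤ q) {N : ℕ} (f : Fin N → ℂ) : 0 ≤ lqNorm q f := by
  haveI : Fact (1 ≤ q) := ⟨hq⟩
  unfold lqNorm; exact norm_nonneg _

/-- The key duality estimate coming from testing the `hz` hypothesis. -/
lemma key_estimate (X : Type*) [NormedAddCommGroup X] [NormedSpace ℂ X]
    (q : ENNReal) (hq2 : 2 ≤ q)
    (hfact : ∀ N : ℕ, ∃ x : Fin N → X, ∀ lam : Fin N → ℂ,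
      (1/2 : ℝ) * lqNorm ⊤ lam ≤ ‖∑ k, lam k • x k‖ ∧ ‖∑ k, lam k • x k‖ ≤ lqNorm q lam)
    (z : ℕ → ℂ) (c : ℝ) (hc : 0 < c)
    (hz : ∀ (F : Finset ℕ) (y : ℕ → X),
      ∑ k ∈ F, ‖y k‖ * ‖z k‖ ≤ c * ⨆ u : ℕ → ℝ, ‖∑ k ∈ F, torus (u k) • y k‖)
    (N : ℕ) (w : Fin N → ℂ) :
    ∑ j : Fin N, ‖w j‖ * ‖z j.val‖ ≤ 2 * c * lqNorm q w := by
  obtain ⟨x, hx⟩ := hfact N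
  haveI : Fact (1 ≤ (⊤ : ENNReal)) := ⟨le_top⟩
  -- each `x j` has norm at least 1/2
  have hxlb : ∀ j : Fin N, (1/2 : ℝ) ≤ ‖x j‖ := by
    intro j
    have h1 := (hx (Pi.single j (1:ℂ))).1
    have hsum : ∑ k, (Pi.single j (1 : ℂ) : Fin N → ℂ) k • x k = x j := by
      rw [Fintype.sum_eq_single j]
      · simp
      · intro b hb; simp [Pi.single_eq_of_ne hb]
    have hn : lqNorm ⊤ (Pi.single j (1 : ℂ)) = 1 := by
      unfold lqNorm
      rw [WithLp.equiv_symm_apply, PiLp.norm_toLp_single]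
      simp
    rw [hsum, hn, mul_one] at h1
    exact h1
  -- the test function
  classical
  set y : ℕ → X := fun k => if h : k < N then w ⟨k, h⟩ • x ⟨k, h⟩ else 0 with hy
  have hzy := hz (Finset.range N) y
  -- rewrite LHS of hzy as a `Fin N` sum
  have hL : ∑ k ∈ Finset.range N, ‖y k‖ * ‖z k‖ = ∑ j : Fin N, ‖w j‖ * ‖x j‖ * ‖z j.val‖ := by
    rw [Finset.sum_range fun k => ‖y k‖ * ‖z k‖]
    refine Finset.sum_congr rfl fun j _ => ?_
    simp [hy, j.isLt, norm_smul, mul_assoc]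
  -- bound the sup on the right
  have hS : (⨆ u : ℕ → ℝ, ‖∑ k ∈ Finset.range N, torus (u k) • y k‖) ≤ lqNorm q w := by
    refine Real.iSup_le (fun u => ?_) (lqNorm_nonneg q (le_trans one_le_two hq2) w)
    have hrw : ∑ k ∈ Finset.range N, torus (u k) • y k
        = ∑ j : Fin N, (torus (u j.val) * w j) • x j := by
      rw [Finset.sum_range fun k => torus (u k) • y k]
      refine Finset.sum_congr rfl fun j _ => ?_
      simp [hy, j.isLt, smul_smul]
    rw [hrw]
    calc ‖∑ j : Fin N, (torus (u j.val) * w j) • x j‖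
        ≤ lqNorm q (fun j => torus (u j.val) * w j) := (hx _).2
      _ = lqNorm q w := by
          refine lqNorm_congr q (by positivity) _ _ fun i => ?_
          rw [norm_mul, norm_torus, one_mul]
  have hmain : ∑ j : Fin N, ‖w j‖ * ‖x j‖ * ‖z j.val‖ ≤ c * lqNorm q w := by
    rw [← hL]
    exact hzy.trans (mul_le_mul_of_nonneg_left hS hc.le)
  have hlow : (1/2 : ℝ) * ∑ j : Fin N, ‖w j‖ * ‖z j.val‖
      ≤ ∑ j : Fin N, ‖w j‖ * ‖x j‖ * ‖z j.val‖ := by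
    rw [Finset.mul_sum]
    refine Finset.sum_le_sum fun j _ => ?_
    have h1 : (0:ℝ) ≤ ‖w j‖ := norm_nonneg _
    have h2 : (0:ℝ) ≤ ‖z j.val‖ := norm_nonneg _
    nlinarith [mul_le_mul_of_nonneg_right (hxlb j) (mul_nonneg h1 h2)]
  nlinarith [hlow.trans hmain]

theorem mon_subset_lq' (X : Type*) [NormedAddCommGroup X] [NormedSpace ℂ X] [CompleteSpace X]
    (hinf : ¬ FiniteDimensional ℂ X)
    (q : ENNReal) (hq2 : 2 ≤ q) (q' : ℝ) (hq' : 1 / q.toReal + 1 / q' = 1)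
    (hfact : ∀ N : ℕ, ∃ x : Fin N → X, ∀ lam : Fin N → ℂ,
      (1/2 : ℝ) * lqNorm ⊤ lam ≤ ‖∑ k, lam k • x k‖ ∧ ‖∑ k, lam k • x k‖ ≤ lqNorm q lam)
    (z : ℕ → ℂ) (c : ℝ) (hc : 0 < c)
    (hz : ∀ (F : Finset ℕ) (y : ℕ → X),
      ∑ k ∈ F, ‖y k‖ * ‖z k‖ ≤ c * ⨆ u : ℕ → ℝ, ‖∑ k ∈ F, torus (u k) • y k‖) :
    Summable fun k => ‖z k‖ ^ q' := by
  have key := key_estimate X q hq2 hfact z c hc hz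
  rcases eq_or_ne q ⊤ with rfl | hqt
  -- case q = ∞, q' = 1
  · have hq'1 : q' = 1 := by
      simp only [ENNReal.toReal_top, div_zero, zero_add] at hq'
      have hne : q' ≠ 0 := by intro h; rw [h] at hq'; simp at hq'
      field_simp at hq'
      linarith
    subst hq'1
    refine summable_of_sum_range_le (c := 2 * c) (fun n => by positivity) fun N => ?_
    rcases Nat.eq_zero_or_pos N with rfl | hN
    · simp; positivity
    · have hkey := key N (fun _ => 1)
      have hn : lqNorm ⊤ (fun _ : Fin N => (1:ℂ)) = 1 := by
        unfold lqNorm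
        rw [PiLp.norm_eq_ciSup]
        haveI : Nonempty (Fin N) := ⟨⟨0, hN⟩⟩
        simp [WithLp.equiv_symm_apply, PiLp.toLp_apply]
      rw [hn, mul_one] at hkey
      simp only [norm_one, one_mul] at hkey
      calc ∑ k ∈ Finset.range N, ‖z k‖ ^ (1:ℝ)
          = ∑ j : Fin N, ‖z j.val‖ := by
            rw [Finset.sum_range]
            exact Finset.sum_congr rfl fun j _ => Real.rpow_one _
        _ ≤ 2 * c := hkey
  -- case q < ∞
  · set p := q.toReal with hp
    have hp2 : (2:ℝ) ≤ p := by
      have := ENNReal.toReal_mono hqt hq2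
      simpa using this
    have hp0 : p ≠ 0 := by linarith
    have hq'pos : 0 < q' := by
      have h1 : 1 / q' = 1 - 1/p := by linarith
      have h2 : (0:ℝ) < 1 - 1/p := by
        have : 1/p ≤ 1/2 := by
          apply one_div_le_one_div_of_le <;> linarith
        linarith
      rw [h1] at *
      exact one_div_pos.mp (by linarith)
    have hq'ne : q' ≠ 0 := hq'pos.ne'
    have hpq : p + q' = p * q' := by
      field_simp at hq'
      linarith
    have hq'1 : 1 < q' := by nlinarith
    refine summable_of_sum_range_le (c := (2 * c) ^ q') (fun n => by positivity) fun N => ?_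
    -- test vector
    set w : Fin N → ℂ := fun j => ((‖z j.val‖ ^ (q' - 1) : ℝ) : ℂ) with hw
    have hnormw : ∀ j, ‖w j‖ = ‖z j.val‖ ^ (q' - 1) := by
      intro j
      rw [hw]
      rw [Complex.norm_real, Real.norm_of_nonneg (by positivity)]
    set S : ℝ := ∑ j : Fin N, ‖z j.val‖ ^ q' with hS
    have hSnn : 0 ≤ S := Finset.sum_nonneg fun j _ => by positivity
    have hrangeS : ∑ k ∈ Finset.range N, ‖z k‖ ^ q' = S := by
      rw [hS, Finset.sum_range]
    rw [hrangeS]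
    -- LHS of key = S
    have hLHS : ∑ j : Fin N, ‖w j‖ * ‖z j.val‖ = S := by
      refine Finset.sum_congr rfl fun j _ => ?_
      rw [hnormw j]
      have : ‖z j.val‖ ^ (q' - 1) * ‖z j.val‖ = ‖z j.val‖ ^ ((q' - 1) + 1) := by
        rw [Real.rpow_add' (norm_nonneg _) (by simpa using hq'ne)]
        rw [Real.rpow_one]
      rw [this]
      norm_num
    -- norm of w = S^(1/p)
    have hpw : lqNorm q w = S ^ (1/p) := by
      unfold lqNorm
      rw [PiLp.norm_eq_sum (by rw [← hp]; positivity)]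
      rw [← hp]
      congr 1
      rw [hS]
      refine Finset.sum_congr rfl fun j _ => ?_
      rw [WithLp.equiv_symm_apply, PiLp.toLp_apply, hnormw j, ← Real.rpow_mul (norm_nonneg _)]
      congr 1
      nlinarith
    have hkey := key N w
    rw [hLHS, hpw] at hkey
    -- now S ≤ 2c * S^(1/p) implies S ≤ (2c)^q'
    rcases eq_or_lt_of_le hSnn with hS0 | hSpos
    · rw [← hS0]; positivity
    · have hsplit : S = S ^ (1/p) * S ^ (1/q') := by
        rw [← Real.rpow_add hSpos, hq', Real.rpow_one]
      have hq'S : S ^ (1/q') ≤ 2 * c := by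
        have hppos : (0:ℝ) < S ^ (1/p) := Real.rpow_pos_of_pos hSpos _
        have h2 : S ^ (1/p) * S ^ (1/q') ≤ S ^ (1/p) * (2 * c) := by
          rw [← hsplit]
          nlinarith [hkey]
        exact (mul_le_mul_iff_right₀ hppos).mp h2
      calc S = (S ^ (1/q')) ^ q' := by
            rw [← Real.rpow_mul hSnn, one_div, inv_mul_cancel₀ hq'ne, Real.rpow_one]
        _ ≤ (2 * c) ^ q' := Real.rpow_le_rpow (by positivity) hq'S hq'pos.le
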